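/- Let k be a field, let n ≥ r ≥ 1, and let w_1,…,w_r be positive integers. Let P = k[x_1,…,x_n] be the polynomial ring and let S be the k-subalgebra of P[T] generated by x_1,…,x_n together with the elements x_i·T^j for 1 ≤ i ≤ r and 1 ≤ j ≤ w_i. Then the quotient S/(x_1·T^{w_1} − 1)·S is a polynomial ring in n variables over k; more precisely, the images of the n elements u := x_1·T^{w_1−1}, x_2·T^{w_2}, …, x_r·T^{w_r}, x_{r+1}, …, x_n generate S/(x_1·T^{w_1} − 1)·S as a k-algebra and are algebraically independent over k. -/

import Mathlib

open Polynomial MvPolynomial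

/-- The `k`-subalgebra `S` of `P[T]` (for `P = k[x₁,…,x_n]`) generated by `x₁, …, x_n`
together with the elements `xᵢ·T^j` for `1 ≤ i ≤ r` and `1 ≤ j ≤ wᵢ`. -/
noncomputable def reesSubalgebra (k : Type*) [Field k] (n r : ℕ) (hrn : r ≤ n)
    (w : Fin r → ℕ) : Subalgebra k (Polynomial (MvPolynomial (Fin n) k)) :=
  Algebra.adjoin k
    ({p | ∃ ℓ : Fin n, p = Polynomial.C (MvPolynomial.X ℓ)} ∪
      {p | ∃ (i : Fin r) (j : ℕ), 1 ≤ j ∧ j ≤ w i ∧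
        p = Polynomial.C (MvPolynomial.X (Fin.castLE hrn i)) * Polynomial.X ^ j})

/-- The `n` elements `u := x₁·T^{w₁−1}, x₂·T^{w₂}, …, x_r·T^{w_r}, x_{r+1}, …, x_n`
of `P[T]` whose images are claimed to be polynomial generators of the `x₁`-chart. -/
noncomputable def chartGens (k : Type*) [Field k] (n r : ℕ) (hr : 0 < r)
    (w : Fin r → ℕ) : Fin n → Polynomial (MvPolynomial (Fin n) k) := fun ℓ =>
  if (ℓ : ℕ) = 0 then
    Polynomial.C (MvPolynomial.X ℓ) * Polynomial.X ^ (w ⟨0, hr⟩ - 1)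
  else if hℓ : (ℓ : ℕ) < r then
    Polynomial.C (MvPolynomial.X ℓ) * Polynomial.X ^ (w ⟨(ℓ : ℕ), hℓ⟩)
  else Polynomial.C (MvPolynomial.X ℓ)

/-- auxiliary computation: products of monomials in `R[X]`. -/
lemma rees_pow_aux {R : Type*} [CommRing R] (a b : R) (p q l m : ℕ) :
    (Polynomial.C a * Polynomial.X ^ p) ^ l * (Polynomial.C b * Polynomial.X ^ q) ^ m
      = Polynomial.C (a ^ l * b ^ m) * Polynomial.X ^ (p * l + q * m) := by
  rw [mul_pow, mul_pow, ← pow_mul, ← pow_mul, map_mul, map_pow, map_pow]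
  ring

/-- auxiliary computation. -/
lemma rees_pow_aux2 {R : Type*} [CommRing R] (a b : R) (q m : ℕ) :
    Polynomial.C a * (Polynomial.C b * Polynomial.X ^ q) ^ m
      = Polynomial.C (a * b ^ m) * Polynomial.X ^ (q * m) := by
  rw [mul_pow, ← pow_mul, map_mul, map_pow]
  ring

/-- auxiliary computation. -/
lemma rees_pow_aux3 {R : Type*} [CommRing R] (a b : R) (p q m : ℕ) :
    (Polynomial.C a * Polynomial.X ^ p) * (Polynomial.C b * Polynomial.X ^ q) ^ m
      = Polynomial.C (a * b ^ m) * Polynomial.X ^ (p + q * m) := by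
  rw [mul_pow, ← pow_mul, map_mul, map_pow, pow_add]
  ring

/-- auxiliary computation. -/
lemma rees_pow_aux4 {R : Type*} [CommRing R] (a b : R) (p q l : ℕ) :
    (Polynomial.C a * Polynomial.X ^ p) ^ l * (Polynomial.C b * Polynomial.X ^ q)
      = Polynomial.C (a ^ l * b) * Polynomial.X ^ (p * l + q) := by
  rw [mul_pow, ← pow_mul, map_mul, map_pow, pow_add]
  ring

/-- Abstract form of the argument: if `R` is generated by `G` as a `k`-algebra, every
element of `G` becomes, modulo the relation `σ + 1 ↝ 1`, a product of the `V ℓ`'s, and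
there is an algebra map `f` of `R` killing `σ` and sending the `V ℓ` to an algebraically
independent family, then the images of the `V ℓ` in `R ⧸ (σ)` generate it and are
algebraically independent. -/
theorem rees_quot_aux {k R L : Type*} [Field k] [CommRing R] [Algebra k R]
    [CommRing L] [Algebra k L] {n : ℕ}
    (G : Set R) (hG : Algebra.adjoin k G = ⊤) (σ : R) (V : Fin n → R)
    (hgen : ∀ g ∈ G, ∃ m : ℕ,
      g * (σ + 1) ^ m ∈ Submonoid.closure (Set.range V ∪ {σ + 1}))
    (f : R →ₐ[k] L) (x : Fin n → L) (hx : AlgebraicIndependent k x)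
    (hfσ : f σ = 0) (hfV : ∀ ℓ, f (V ℓ) = x ℓ) :
    Algebra.adjoin k (Set.range fun ℓ : Fin n =>
        Ideal.Quotient.mk (Ideal.span {σ}) (V ℓ)) = ⊤ ∧
      AlgebraicIndependent k (fun ℓ : Fin n =>
        Ideal.Quotient.mk (Ideal.span {σ}) (V ℓ)) := by
  set I := Ideal.span {σ} with hI
  have hσ0 : Ideal.Quotient.mk I σ = 0 :=
    Ideal.Quotient.eq_zero_iff_mem.2 (Ideal.subset_span rfl)
  have hs1 : Ideal.Quotient.mk I (σ + 1) = 1 := by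
    rw [map_add, hσ0, map_one, zero_add]
  constructor
  · rw [eq_top_iff]
    intro q _
    obtain ⟨a, rfl⟩ := Ideal.Quotient.mk_surjective q
    have ha : a ∈ Algebra.adjoin k G := hG ▸ Algebra.mem_top
    have h1 : Ideal.Quotient.mkₐ k I a ∈
        (Algebra.adjoin k G).map (Ideal.Quotient.mkₐ k I) :=
      Subalgebra.mem_map.2 ⟨a, ha, rfl⟩
    rw [AlgHom.map_adjoin] at h1
    have h2 : Algebra.adjoin k (⇑(Ideal.Quotient.mkₐ k I) '' G) ≤
        Algebra.adjoin k (Set.range fun ℓ : Fin n =>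
          Ideal.Quotient.mk I (V ℓ)) := by
      apply Algebra.adjoin_le
      rintro _ ⟨g, hg, rfl⟩
      obtain ⟨m, hm⟩ := hgen g hg
      have hrw : Ideal.Quotient.mkₐ k I g = Ideal.Quotient.mk I (g * (σ + 1) ^ m) := by
        rw [map_mul, map_pow, hs1, one_pow, mul_one, Ideal.Quotient.mkₐ_eq_mk]
      rw [hrw]
      refine Submonoid.closure_induction
        (motive := fun b _ => Ideal.Quotient.mk I b ∈ Algebra.adjoin k
          (Set.range fun ℓ : Fin n => Ideal.Quotient.mk I (V ℓ))) ?_ ?_ ?_ hm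
      · rintro b (⟨ℓ, rfl⟩ | hb)
        · exact Algebra.subset_adjoin ⟨ℓ, rfl⟩
        · rw [Set.mem_singleton_iff] at hb
          rw [hb, hs1]
          exact one_mem _
      · show Ideal.Quotient.mk I 1 ∈ Algebra.adjoin k
          (Set.range fun ℓ : Fin n => Ideal.Quotient.mk I (V ℓ))
        rw [map_one]; exact one_mem _
      · intro b c _ _ hb hc
        show Ideal.Quotient.mk I (b * c) ∈ Algebra.adjoin k
          (Set.range fun ℓ : Fin n => Ideal.Quotient.mk I (V ℓ))
        rw [map_mul]
        exact mul_mem hb hc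
    exact h2 h1
  · have hlift : ∀ a : R, a ∈ I → f a = 0 := by
      intro a ha
      rw [hI, Ideal.mem_span_singleton] at ha
      obtain ⟨c, rfl⟩ := ha
      rw [map_mul, hfσ, zero_mul]
    apply AlgebraicIndependent.of_comp (Ideal.Quotient.liftₐ I f hlift)
    have hcmp : (⇑(Ideal.Quotient.liftₐ I f hlift) ∘ fun ℓ : Fin n =>
        Ideal.Quotient.mk I (V ℓ)) = x := by
      funext ℓ
      have : Ideal.Quotient.liftₐ I f hlift (Ideal.Quotient.mk I (V ℓ)) = f (V ℓ) :=
        Ideal.Quotient.liftₐ_apply I f hlift _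
      simp only [Function.comp_apply, this, hfV ℓ]
    rw [hcmp]
    exact hx

set_option maxHeartbeats 1000000 in
set_option synthInstance.maxHeartbeats 400000 in
/-- the quotient of `S` by the ideal generated by `x₁·T^{w₁} − 1` is a
polynomial ring in `n` variables over `k`: the images of the `n` elements
`u := x₁·T^{w₁−1}, x₂·T^{w₂}, …, x_r·T^{w_r}, x_{r+1}, …, x_n` generate it as a `k`-algebra
and are algebraically independent over `k`. -/
theorem chart_of_weighted_rees_is_polynomial_ring
    (k : Type*) [Field k] (n r : ℕ) (hr : 1 ≤ r) (hrn : r ≤ n)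
    (w : Fin r → ℕ) (hw : ∀ i, 0 < w i)
    (hmem : ∀ ℓ : Fin n, chartGens k n r hr w ℓ ∈ reesSubalgebra k n r hrn w)
    (hs : Polynomial.C (MvPolynomial.X (Fin.castLE hrn ⟨0, hr⟩)) *
        Polynomial.X ^ (w ⟨0, hr⟩) - 1 ∈ reesSubalgebra k n r hrn w) :
    Algebra.adjoin k
        (Set.range fun ℓ : Fin n =>
          Ideal.Quotient.mk
            (Ideal.span {(⟨_, hs⟩ : reesSubalgebra k n r hrn w)})
            ⟨chartGens k n r hr w ℓ, hmem ℓ⟩) = ⊤ ∧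
      @AlgebraicIndependent _ k _
        (fun ℓ : Fin n =>
          Ideal.Quotient.mk
            (Ideal.span {(⟨_, hs⟩ : reesSubalgebra k n r hrn w)})
            ⟨chartGens k n r hr w ℓ, hmem ℓ⟩) _
        (@Ideal.Quotient.commRing (reesSubalgebra k n r hrn w) _
          (Ideal.span {(⟨_, hs⟩ : reesSubalgebra k n r hrn w)})) (Ideal.Quotient.algebra k) := by
  classical
  set e0n : Fin n := Fin.castLE hrn ⟨0, hr⟩ with he0n
  have he0v : (e0n : ℕ) = 0 := rfl
  set w0 : ℕ := w ⟨0, hr⟩ with hw0def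
  have hw0 : 0 < w0 := hw _
  set σ : reesSubalgebra k n r hrn w := ⟨_, hs⟩ with hσdef
  set V : Fin n → reesSubalgebra k n r hrn w :=
    fun ℓ => ⟨chartGens k n r hr w ℓ, hmem ℓ⟩ with hVdef
  -- value of σ + 1
  have hsSval : ((σ + 1 : reesSubalgebra k n r hrn w) :
      Polynomial (MvPolynomial (Fin n) k))
      = Polynomial.C (MvPolynomial.X e0n) * Polynomial.X ^ w0 := by
    show Polynomial.C (MvPolynomial.X (Fin.castLE hrn ⟨0, hr⟩)) *
        Polynomial.X ^ (w ⟨0, hr⟩) - 1 + 1 = _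
    rw [sub_add_cancel]
  -- values of the chart generators
  have hV0 : chartGens k n r hr w e0n
      = Polynomial.C (MvPolynomial.X e0n) * Polynomial.X ^ (w0 - 1) := by
    simp [chartGens, he0v]
    rfl
  have hVpos : ∀ (ℓ : Fin n) (h : (ℓ : ℕ) < r), (ℓ : ℕ) ≠ 0 →
      chartGens k n r hr w ℓ
        = Polynomial.C (MvPolynomial.X ℓ) * Polynomial.X ^ (w ⟨(ℓ : ℕ), h⟩) := by
    intro ℓ h h0
    simp [chartGens, h0, h]
  have hVbig : ∀ (ℓ : Fin n), ¬ (ℓ : ℕ) < r →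
      chartGens k n r hr w ℓ = Polynomial.C (MvPolynomial.X ℓ) := by
    intro ℓ h
    have h0 : (ℓ : ℕ) ≠ 0 := by omega
    simp [chartGens, h0, h]
  -- closure monoid
  have hVcl : ∀ ℓ, V ℓ ∈ Submonoid.closure (Set.range V ∪ {σ + 1}) :=
    fun ℓ => Submonoid.subset_closure (Or.inl ⟨ℓ, rfl⟩)
  have hscl : σ + 1 ∈ Submonoid.closure (Set.range V ∪ {σ + 1}) :=
    Submonoid.subset_closure (Or.inr rfl)
  -- generation hypothesis
  have hgen : ∀ g ∈ (((↑) : reesSubalgebra k n r hrn w →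
        Polynomial (MvPolynomial (Fin n) k)) ⁻¹'
      ({p | ∃ ℓ : Fin n, p = Polynomial.C (MvPolynomial.X ℓ)} ∪
        {p | ∃ (i : Fin r) (j : ℕ), 1 ≤ j ∧ j ≤ w i ∧
          p = Polynomial.C (MvPolynomial.X (Fin.castLE hrn i)) * Polynomial.X ^ j})),
      ∃ m : ℕ, g * (σ + 1) ^ m ∈ Submonoid.closure (Set.range V ∪ {σ + 1}) := by
    intro g hg
    rcases hg with ⟨ℓ, hℓ⟩ | ⟨i, j, hj1, hjw, heq⟩
    · -- g = C (X ℓ)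
      by_cases h0 : (ℓ : ℕ) = 0
      · -- x₁ ≡ u^{w0}
        have hℓe : ℓ = e0n := Fin.ext (by simp [h0, he0v])
        refine ⟨w0, ?_⟩
        have hid : g * (σ + 1) ^ w0 = V e0n ^ w0 * (σ + 1) := by
          apply Subtype.ext
          push_cast [hsSval, hV0, hℓ, hℓe, hVdef]
          rw [rees_pow_aux2, rees_pow_aux4]
          obtain ⟨d, hd⟩ : ∃ d, w0 = d + 1 := ⟨w0 - 1, by omega⟩
          congr 1
          · ring
          · rw [show w0 - 1 = d from by omega, hd]
            ring
        rw [hid]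
        exact mul_mem (pow_mem (hVcl e0n) _) hscl
      · by_cases hlt : (ℓ : ℕ) < r
        · -- x_ℓ ≡ v_ℓ u^{w_ℓ}
          refine ⟨w ⟨(ℓ : ℕ), hlt⟩, ?_⟩
          have hid : g * (σ + 1) ^ (w ⟨(ℓ : ℕ), hlt⟩)
              = V ℓ * V e0n ^ (w ⟨(ℓ : ℕ), hlt⟩) := by
            apply Subtype.ext
            push_cast [hsSval, hV0, hVpos ℓ hlt h0, hℓ, hVdef]
            rw [rees_pow_aux2, rees_pow_aux3]
            obtain ⟨d, hd⟩ : ∃ d, w0 = d + 1 := ⟨w0 - 1, by omega⟩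
            congr 1
            rw [show w0 - 1 = d from by omega, hd]
            ring
          rw [hid]
          exact mul_mem (hVcl ℓ) (pow_mem (hVcl e0n) _)
        · -- x_ℓ = V ℓ itself
          refine ⟨0, ?_⟩
          have hid : g * (σ + 1) ^ 0 = V ℓ := by
            apply Subtype.ext
            push_cast [hℓ]
            simp [chartGens, h0, hlt, hVdef]
          rw [hid]
          exact hVcl ℓ
    · -- g = C (X i) * X^j
      by_cases h0 : (i : ℕ) = 0
      · -- x₁ T^j ≡ u^{w0 - j}
        have hℓe : Fin.castLE hrn i = e0n := Fin.ext (by simp [he0n, h0])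
        have hi : i = ⟨0, hr⟩ := Fin.ext h0
        have hjw0 : j ≤ w0 := by rw [hw0def, ← hi]; exact hjw
        refine ⟨w0 - j, ?_⟩
        have hid : g * (σ + 1) ^ (w0 - j) = V e0n ^ (w0 - j) * (σ + 1) := by
          apply Subtype.ext
          push_cast [hsSval, hV0, heq, hℓe, hVdef]
          rw [rees_pow_aux3, rees_pow_aux4]
          obtain ⟨d, hd⟩ : ∃ d, w0 = j + d := ⟨w0 - j, by omega⟩
          obtain ⟨j', hj'⟩ : ∃ j', j = j' + 1 := ⟨j - 1, by omega⟩
          congr 1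
          · ring
          · rw [show w0 - j = d from by omega, show w0 - 1 = j' + d from by omega,
              hd, hj']
            ring
        rw [hid]
        exact mul_mem (pow_mem (hVcl e0n) _) hscl
      · -- x_i T^j ≡ v_i u^{w_i - j}
        have hlt : ((Fin.castLE hrn i : Fin n) : ℕ) < r := by
          simpa using i.2
        have hℓ0 : ((Fin.castLE hrn i : Fin n) : ℕ) ≠ 0 := by simpa using h0
        have hii : (⟨((Fin.castLE hrn i : Fin n) : ℕ), hlt⟩ : Fin r) = i :=
          Fin.ext (by simp)
        have hjwi : j ≤ w i := hjw
        refine ⟨w i - j, ?_⟩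
        have hid : g * (σ + 1) ^ (w i - j)
            = V (Fin.castLE hrn i) * V e0n ^ (w i - j) := by
          apply Subtype.ext
          push_cast [hsSval, hV0, hVpos (Fin.castLE hrn i) hlt hℓ0, heq, hii, hVdef]
          rw [rees_pow_aux3, rees_pow_aux3]
          obtain ⟨d, hd⟩ : ∃ d, w i = j + d := ⟨w i - j, by omega⟩
          obtain ⟨c, hc⟩ : ∃ c, w0 = c + 1 := ⟨w0 - 1, by omega⟩
          congr 1
          rw [show w i - j = d from by omega, show w0 - 1 = c from by omega, hd, hc]
          ring
        rw [hid]
        exact mul_mem (hVcl (Fin.castLE hrn i)) (pow_mem (hVcl e0n) _)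
  -- the generating set of S
  have hG : Algebra.adjoin k
      (((↑) : reesSubalgebra k n r hrn w → Polynomial (MvPolynomial (Fin n) k)) ⁻¹'
        ({p | ∃ ℓ : Fin n, p = Polynomial.C (MvPolynomial.X ℓ)} ∪
          {p | ∃ (i : Fin r) (j : ℕ), 1 ≤ j ∧ j ≤ w i ∧
            p = Polynomial.C (MvPolynomial.X (Fin.castLE hrn i)) * Polynomial.X ^ j})) =
      ⊤ := Algebra.adjoin_adjoin_coe_preimage
  -- the algebra map to the localization
  have hinv : (algebraMap (MvPolynomial (Fin n) k)
        (Localization.Away (MvPolynomial.X e0n : MvPolynomial (Fin n) k)))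
        (MvPolynomial.X e0n) *
      IsLocalization.Away.invSelf
        (S := Localization.Away (MvPolynomial.X e0n : MvPolynomial (Fin n) k))
        (MvPolynomial.X e0n : MvPolynomial (Fin n) k) = 1 :=
    IsLocalization.Away.mul_invSelf _
  set iL := algebraMap (MvPolynomial (Fin n) k)
      (Localization.Away (MvPolynomial.X e0n : MvPolynomial (Fin n) k)) with hiL
  set t := IsLocalization.Away.invSelf
      (S := Localization.Away (MvPolynomial.X e0n : MvPolynomial (Fin n) k))
      (MvPolynomial.X e0n : MvPolynomial (Fin n) k) with ht
  set φ₀ : MvPolynomial (Fin n) k →ₐ[k]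
      Localization.Away (MvPolynomial.X e0n : MvPolynomial (Fin n) k) :=
    MvPolynomial.aeval (fun ℓ : Fin n =>
      if (ℓ : ℕ) = 0 then (iL (MvPolynomial.X ℓ)) ^ w0
      else if h : (ℓ : ℕ) < r then
        iL (MvPolynomial.X ℓ) * (iL (MvPolynomial.X e0n)) ^ (w ⟨(ℓ : ℕ), h⟩)
      else iL (MvPolynomial.X ℓ)) with hφ₀
  set ψ : Polynomial (MvPolynomial (Fin n) k) →ₐ[k]
      Localization.Away (MvPolynomial.X e0n : MvPolynomial (Fin n) k) :=
    Polynomial.aevalTower φ₀ t with hψ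
  have hφ₀X : ∀ ℓ : Fin n, φ₀ (MvPolynomial.X ℓ) =
      (if (ℓ : ℕ) = 0 then (iL (MvPolynomial.X ℓ)) ^ w0
      else if h : (ℓ : ℕ) < r then
        iL (MvPolynomial.X ℓ) * (iL (MvPolynomial.X e0n)) ^ (w ⟨(ℓ : ℕ), h⟩)
      else iL (MvPolynomial.X ℓ)) := fun ℓ => MvPolynomial.aeval_X _ ℓ
  set f := ψ.comp (reesSubalgebra k n r hrn w).val with hf
  have hfσ : f σ = 0 := by
    have hval : (σ : Polynomial (MvPolynomial (Fin n) k)) =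
        Polynomial.C (MvPolynomial.X e0n) * Polynomial.X ^ w0 - 1 := rfl
    have : f σ = ψ (σ : Polynomial (MvPolynomial (Fin n) k)) := rfl
    rw [this, hval, map_sub, map_one, map_mul, map_pow, hψ,
      Polynomial.aevalTower_C, Polynomial.aevalTower_X, hφ₀X]
    simp only [he0v, if_pos]
    rw [← mul_pow, hinv, one_pow, sub_self]
  have hfV : ∀ ℓ : Fin n, f (V ℓ) = iL (MvPolynomial.X ℓ) := by
    intro ℓ
    have hfl : f (V ℓ) = ψ (chartGens k n r hr w ℓ) := rfl
    rw [hfl]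
    by_cases h0 : (ℓ : ℕ) = 0
    · have hℓe : ℓ = e0n := Fin.ext (by simp [h0, he0v])
      rw [hℓe, hV0]
      rw [hψ, map_mul, map_pow, Polynomial.aevalTower_C, Polynomial.aevalTower_X, hφ₀X]
      simp only [he0v, if_pos]
      obtain ⟨d, hd⟩ : ∃ d, w0 = d + 1 := ⟨w0 - 1, by omega⟩
      rw [hd]
      simp only [Nat.add_sub_cancel]
      have : iL (MvPolynomial.X e0n) ^ (d + 1) * t ^ d =
          (iL (MvPolynomial.X e0n) * t) ^ d * iL (MvPolynomial.X e0n) := by ring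
      rw [this, hinv, one_pow, one_mul]
    · by_cases hlt : (ℓ : ℕ) < r
      · rw [hVpos ℓ hlt h0]
        rw [hψ, map_mul, map_pow, Polynomial.aevalTower_C, Polynomial.aevalTower_X, hφ₀X]
        simp only [h0, if_neg, hlt, dif_pos, ite_false]
        have : iL (MvPolynomial.X ℓ) *
            iL (MvPolynomial.X e0n) ^ (w ⟨(ℓ : ℕ), hlt⟩) * t ^ (w ⟨(ℓ : ℕ), hlt⟩) =
            iL (MvPolynomial.X ℓ) * (iL (MvPolynomial.X e0n) * t) ^ (w ⟨(ℓ : ℕ), hlt⟩) := by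
          ring
        rw [this, hinv, one_pow, mul_one]
      · rw [hVbig ℓ hlt, hψ, Polynomial.aevalTower_C, hφ₀X]
        simp [h0, hlt]
  have hinj : Function.Injective iL := by
    rw [hiL]
    exact IsLocalization.injective _
      (powers_le_nonZeroDivisors_of_noZeroDivisors (MvPolynomial.X_ne_zero e0n))
  have hx : AlgebraicIndependent k (fun ℓ : Fin n => iL (MvPolynomial.X ℓ)) := by
    have h := (MvPolynomial.algebraicIndependent_X (Fin n) k).map
      (f := IsScalarTower.toAlgHom k (MvPolynomial (Fin n) k)
        (Localization.Away (MvPolynomial.X e0n : MvPolynomial (Fin n) k)))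
      (hinj.injOn)
    exact h
  exact rees_quot_aux _ hG σ V hgen f _ hx hfσ hfV
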